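/- If a poset X admits a topology τ making (X; τ, ≤) a Priestley space, then every order component of X is compact with respect to its interval topology. -/

import Mathlib

/-- The interval topology on a poset: generated by the subbase of complements of
principal down-sets `(x] = Set.Iic x` and principal up-sets `[x) = Set.Ici x`. -/
def intervalTopology (X : Type*) [Preorder X] : TopologicalSpace X :=
  TopologicalSpace.generateFrom
    ({S | ∃ x : X, S = (Set.Iic x)ᶜ} ∪ {S | ∃ x : X, S = (Set.Ici x)ᶜ})

/-- A Priestley space: a poset with a compact topology which is totally
order-disconnected, i.e. whenever `x ≱ y` there is a clopen down-set containing `x`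
but not `y`. -/
def IsPriestley (X : Type*) [TopologicalSpace X] [Preorder X] : Prop :=
  CompactSpace X ∧
    ∀ x y : X, ¬ y ≤ x → ∃ U : Set X, IsClopen U ∧ IsLowerSet U ∧ x ∈ U ∧ y ∉ U

section Aux

variable {X : Type*} [PartialOrder X] [TopologicalSpace X]

theorem priestley_isClosed_Iic (hp : IsPriestley X) (a : X) : IsClosed (Set.Iic a) := by
  rw [← isOpen_compl_iff, isOpen_iff_forall_mem_open]
  intro y hy
  obtain ⟨U, hU, hUl, haU, hyU⟩ := hp.2 a y (by simpa [Set.Iic] using hy)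
  exact ⟨Uᶜ, fun z hz hza => hz (hUl hza haU), isOpen_compl_iff.2 hU.1, hyU⟩

theorem priestley_isClosed_Ici (hp : IsPriestley X) (a : X) : IsClosed (Set.Ici a) := by
  rw [← isOpen_compl_iff, isOpen_iff_forall_mem_open]
  intro y hy
  obtain ⟨U, hU, hUl, hyU, haU⟩ := hp.2 y a (by simpa [Set.Ici] using hy)
  exact ⟨U, fun z hzU hza => haU (hUl hza hzU), hU.2, hyU⟩

end Aux

/-- If a poset admits a Priestley topology, then every order component (equivalence
class of the transitive closure of comparability) is compact in its interval topology. -/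
theorem orderComponent_compact_of_representable {X : Type*} [PartialOrder X]
    (h : ∃ τ : TopologicalSpace X, @IsPriestley X τ _) (x : X) :
    @CompactSpace {y : X // Relation.ReflTransGen (fun a b : X => a ≤ b ∨ b ≤ a) x y}
      (intervalTopology _) := by
  obtain ⟨τ, hp⟩ := h
  letI : TopologicalSpace X := τ
  set r : X → X → Prop := fun a b : X => a ≤ b ∨ b ≤ a with hr
  set C := {y : X // Relation.ReflTransGen r x y} with hC
  letI tC : TopologicalSpace C := intervalTopology C
  -- membership in the component extends through comparability
  have hext : ∀ a p : X, Relation.ReflTransGen r x a → (p ≤ a ∨ a ≤ p) →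
      Relation.ReflTransGen r x p := by
    intro a p ha hpa
    exact ha.tail (hpa.symm)
  constructor
  rw [isCompact_iff_ultrafilter_le_nhds]
  intro F _
  -- push forward to X
  set G : Ultrafilter X := F.map Subtype.val with hG
  obtain ⟨p, -, hpG⟩ := hp.1.isCompact_univ.ultrafilter_le_nhds G (by simp)
  -- p belongs to every τ-closed set in G
  have hmem : ∀ S : Set X, IsClosed S → S ∈ G → p ∈ S := by
    intro S hS hSG
    have : ClusterPt p (Filter.principal S) := by
      refine Filter.neBot_of_le (f := (G : Filter X)) (le_inf hpG ?_)
      exact Filter.le_principal_iff.2 hSG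
    rwa [← mem_closure_iff_clusterPt, hS.closure_eq] at this
  have hIic : ∀ a : X, Set.Iic a ∈ G → p ≤ a := fun a ha =>
    hmem _ (priestley_isClosed_Iic hp a) ha
  have hIci : ∀ a : X, Set.Ici a ∈ G → a ≤ p := fun a ha =>
    hmem _ (priestley_isClosed_Ici hp a) ha
  -- choose the limit point q in C
  have key : ∃ q : C, (∀ a : C, Set.Iic (a : X) ∈ G → (q : X) ≤ a) ∧
      (∀ a : C, Set.Ici (a : X) ∈ G → (a : X) ≤ (q : X)) := by
    by_cases hw : ∃ a : C, Set.Iic (a : X) ∈ G ∨ Set.Ici (a : X) ∈ G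
    · obtain ⟨a, ha⟩ := hw
      have hpC : Relation.ReflTransGen r x p := by
        rcases ha with ha | ha
        · exact hext _ _ a.2 (Or.inl (hIic _ ha))
        · exact hext _ _ a.2 (Or.inr (hIci _ ha))
      exact ⟨⟨p, hpC⟩, fun b hb => hIic _ hb, fun b hb => hIci _ hb⟩
    · push_neg at hw
      exact ⟨⟨x, Relation.ReflTransGen.refl⟩,
        fun b hb => absurd hb (hw b).1, fun b hb => absurd hb (hw b).2⟩
  obtain ⟨q, hq1, hq2⟩ := key
  refine ⟨q, trivial, ?_⟩
  -- convergence in the generated topology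
  show (F : Filter C) ≤ @nhds C (intervalTopology C) q
  rw [intervalTopology, TopologicalSpace.nhds_generateFrom]
  refine le_iInf₂ fun s hs => ?_
  rw [Filter.le_principal_iff]
  obtain ⟨hqs, (⟨a, rfl⟩ | ⟨a, rfl⟩)⟩ := hs
  · -- s = (Iic a)ᶜ with ¬ q ≤ a
    have hnot : Set.Iic (a : X) ∉ G := fun hmem => hqs (hq1 a hmem)
    have : (Set.Iic (a : X))ᶜ ∈ G := Ultrafilter.compl_mem_iff_notMem.2 hnot
    have : Subtype.val ⁻¹' (Set.Iic (a : X))ᶜ ∈ F := this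
    exact this
  · have hnot : Set.Ici (a : X) ∉ G := fun hmem => hqs (hq2 a hmem)
    have : (Set.Ici (a : X))ᶜ ∈ G := Ultrafilter.compl_mem_iff_notMem.2 hnot
    have : Subtype.val ⁻¹' (Set.Ici (a : X))ᶜ ∈ F := this
    exact this
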